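/- Renormalization of the Arnoux–Yoccoz interval exchange (Arnoux–Yoccoz): let g ≥ 2, let IE be the Arnoux–Yoccoz interval exchange, and define the first return map ĨE : [0,α) → [0,α) by ĨE(s) = IE(s) if IE(s) < α and ĨE(s) = IE(IE(s)) otherwise. Then for every s ∈ [0, α), ψ(ĨE(s)) = IE(ψ(s)), where ψ(s) = fract(α⁻¹ s + (α⁻¹ − 1)/2). -/
import Mathlib


/-- The partial sum `α + α² + ⋯ + α^k`.  The interval `J_k` of the Arnoux–Yoccoz
partition of `[0,1)` is `[aySum α (k-1), aySum α k)`. -/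
noncomputable def aySum (α : ℝ) (k : ℕ) : ℝ := ∑ j ∈ Finset.Icc 1 k, α ^ j

/-- The index `k ≥ 1` such that `t` lies in `J_k = [aySum α (k-1), aySum α k)`
(the least `k` with `t < aySum α k`). -/
noncomputable def ayIdx (α : ℝ) (t : ℝ) : ℕ := sInf {k : ℕ | t < aySum α k}

/-- The first involution `I₁`, rotating each interval `J_k` halfway around:
`I₁ t = t + α^k/2` if this value lies in `J_k`, and `t - α^k/2` otherwise,
where `k` is the index with `t ∈ J_k`. -/
noncomputable def ayI1 (α : ℝ) (t : ℝ) : ℝ :=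
  if t + α ^ ayIdx α t / 2 ∈ Set.Ico (aySum α (ayIdx α t - 1)) (aySum α (ayIdx α t)) then
    t + α ^ ayIdx α t / 2
  else
    t - α ^ ayIdx α t / 2

/-- The second involution `I₂ : t ↦ t + 1/2 (mod 1)`, rotating `[0,1)` halfway around. -/
noncomputable def ayI2 (t : ℝ) : ℝ := Int.fract (t + 1 / 2)

/-- The Arnoux–Yoccoz interval exchange transformation `IE = I₂ ∘ I₁` on `[0,1)`. -/
noncomputable def ayIE (α : ℝ) (t : ℝ) : ℝ := ayI2 (ayI1 α t)


/-- The renormalizing map `ψ(s) = α⁻¹ s + (α⁻¹ − 1)/2 (mod 1)`. -/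
noncomputable def ayPsi (α : ℝ) (s : ℝ) : ℝ := Int.fract (α⁻¹ * s + (α⁻¹ - 1) / 2)

/-- The first return map `ĨE` of `IE` to `[0, α)`:
`ĨE(s) = IE(s)` if `IE(s) < α`, and `ĨE(s) = IE(IE(s))` otherwise. -/
noncomputable def ayIEhat (α : ℝ) (s : ℝ) : ℝ :=
  if ayIE α s < α then ayIE α s else ayIE α (ayIE α s)


lemma aySum_zero (α : ℝ) : aySum α 0 = 0 := by simp [aySum]

lemma aySum_one (α : ℝ) : aySum α 1 = α := by simp [aySum]

lemma aySum_succ (α : ℝ) (k : ℕ) : aySum α (k+1) = aySum α k + α ^ (k+1) := by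
  rw [aySum, aySum, Finset.sum_Icc_succ_top (by omega : 1 ≤ k + 1)]

lemma aySum_nonneg (α : ℝ) (hα : 0 ≤ α) (k : ℕ) : 0 ≤ aySum α k :=
  Finset.sum_nonneg fun i _ => pow_nonneg hα i

lemma aySum_mono (α : ℝ) (hα : 0 ≤ α) {j k : ℕ} (h : j ≤ k) : aySum α j ≤ aySum α k :=
  Finset.sum_le_sum_of_subset_of_nonneg (Finset.Icc_subset_Icc_right h)
    (fun i _ _ => pow_nonneg hα i)

lemma aySum_mul (α : ℝ) (k : ℕ) : α * aySum α k + α = aySum α (k+1) := by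
  induction k with
  | zero => simp [aySum_zero, aySum_one]
  | succ k ih =>
      rw [aySum_succ α k, aySum_succ α (k+1)]
      linear_combination ih

lemma ayIdx_eq (α t : ℝ) (k : ℕ) (hα : 0 ≤ α)
    (h1 : aySum α k ≤ t) (h2 : t < aySum α (k+1)) : ayIdx α t = k + 1 := by
  have hne : {j : ℕ | t < aySum α j}.Nonempty := ⟨k+1, h2⟩
  rw [ayIdx]
  refine le_antisymm (Nat.sInf_le h2) ?_
  by_contra h
  push_neg at h
  have hm := Nat.sInf_mem hne
  have hle : aySum α (sInf {j : ℕ | t < aySum α j}) ≤ aySum α k :=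
    aySum_mono α hα (by omega)
  simp only [Set.mem_setOf_eq] at hm
  linarith

lemma ayI1_add (α t : ℝ) (hα : 0 ≤ α) (k : ℕ)
    (h1 : aySum α k ≤ t) (h2 : t + α ^ (k+1) / 2 < aySum α (k+1)) :
    ayI1 α t = t + α ^ (k+1) / 2 := by
  have hp : 0 ≤ α ^ (k+1) := pow_nonneg hα _
  have hidx : ayIdx α t = k + 1 := ayIdx_eq α t k hα h1 (by linarith)
  rw [ayI1, hidx]
  simp only [Nat.add_sub_cancel]
  rw [if_pos (Set.mem_Ico.mpr ⟨by linarith, h2⟩)]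

lemma ayI1_sub (α t : ℝ) (hα : 0 ≤ α) (k : ℕ)
    (h1 : aySum α k + α ^ (k+1) / 2 ≤ t) (h2 : t < aySum α (k+1)) :
    ayI1 α t = t - α ^ (k+1) / 2 := by
  have hp : 0 ≤ α ^ (k+1) := pow_nonneg hα _
  have hidx : ayIdx α t = k + 1 := ayIdx_eq α t k hα (by linarith) h2
  rw [ayI1, hidx]
  simp only [Nat.add_sub_cancel]
  rw [if_neg]
  intro hmem
  rw [Set.mem_Ico] at hmem
  have := aySum_succ α k
  linarith [hmem.2]

lemma ay_key (α : ℝ) (m : ℕ) (hsum' : aySum α (m+2) = 1) :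
    α * (2 - α ^ (m+2)) = 1 := by
  have h1 := aySum_succ α (m+1)
  have h2 := aySum_mul α (m+1)
  linear_combination h2 + α * h1 + (1 - α) * hsum'

lemma ayFract1 {x : ℝ} (h1 : 0 ≤ x) (h2 : x < 1) : Int.fract x = x :=
  Int.fract_eq_self.mpr ⟨h1, h2⟩

lemma ayFract2 {x : ℝ} (h1 : 1 ≤ x) (h2 : x < 2) : Int.fract x = x - 1 := by
  have hf : ⌊x⌋ = 1 := by
    rw [Int.floor_eq_iff]
    constructor <;> push_cast <;> linarith
  rw [Int.fract, hf]
  norm_num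

lemma ayFractAdd (x : ℝ) : Int.fract (x + 1) = Int.fract x := by
  rw [show x + 1 = x + ((1:ℤ):ℝ) by push_cast; ring, Int.fract_add_intCast]

lemma ay_exists_idx (α : ℝ) (hα : 0 ≤ α) (u : ℝ) (hu0 : 0 ≤ u) :
    ∀ n, u < aySum α n → ∃ k, k + 1 ≤ n ∧ aySum α k ≤ u ∧ u < aySum α (k+1) := by
  intro n
  induction n with
  | zero => intro h; rw [aySum_zero] at h; linarith
  | succ n ih =>
      intro h
      by_cases hn : u < aySum α n
      · obtain ⟨k, ha, hb, hc⟩ := ih hn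
        exact ⟨k, by omega, hb, hc⟩
      · exact ⟨n, le_refl _, by linarith, h⟩

lemma ay_key_case3 (α : ℝ) (m : ℕ) (hα0 : 0 < α) (hα1 : α < 1)
    (hsum' : aySum α (m+2) = 1) (u : ℝ) (hu0 : 0 ≤ u) (hu1 : u < aySum α (m+1)) :
    ayPsi α (ayIE α (α * u + α)) = ayIE α u := by
  have hα0' := hα0.le
  have hA0 : (0:ℝ) < α ^ (m+2) := pow_pos hα0 _
  have hA1 : α ^ (m+2) < 1 := pow_lt_one₀ hα0' hα1 (by omega)
  have hkey := ay_key α m hsum'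
  have hhalf : 1/2 < α := by nlinarith [mul_pos hα0 hA0]
  have hinv : α⁻¹ = 2 - α ^ (m+2) := inv_eq_of_mul_eq_one_right hkey
  have hm1 : aySum α (m+1) = 1 - α ^ (m+2) := by
    have := aySum_succ α (m+1); linarith
  obtain ⟨k, hkn, hk1, hk2⟩ := ay_exists_idx α hα0' u hu0 (m+1) hu1
  have hs1 : α * aySum α k + α = aySum α (k+1) := aySum_mul α k
  have hs2 : α * aySum α (k+1) + α = aySum α (k+2) := aySum_mul α (k+1)
  have hck1 : aySum α (k+1) ≤ aySum α (m+1) := aySum_mono α hα0' hkn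
  have hsucc : aySum α (k+1) = aySum α k + α ^ (k+1) := aySum_succ α k
  have hp : (0:ℝ) ≤ α ^ (k+1) := pow_nonneg hα0' _
  have hpk : α * α ^ (k+1) = α ^ (k+2) := by ring
  have hc0 : 0 ≤ aySum α k := aySum_nonneg α hα0' k
  obtain ⟨x, hxu, hxt, hx1, hx2⟩ :
      ∃ x, ayI1 α u = x ∧ ayI1 α (α*u+α) = α*x + α ∧ aySum α k ≤ x ∧ x < aySum α (k+1) := by
    by_cases hh : u + α ^ (k+1)/2 < aySum α (k+1)
    · refine ⟨u + α ^ (k+1)/2, ayI1_add α u hα0' k hk1 hh, ?_, by linarith, hh⟩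
      have e1 : aySum α (k+1) ≤ α*u + α := by
        linarith [mul_le_mul_of_nonneg_left hk1 hα0']
      have e2 : (α*u + α) + α ^ (k+2)/2 < aySum α (k+2) := by
        linarith [mul_lt_mul_of_pos_left hh hα0]
      rw [ayI1_add α (α*u+α) hα0' (k+1) e1 e2]; ring
    · push_neg at hh
      have hx : aySum α k + α ^ (k+1)/2 ≤ u := by linarith
      refine ⟨u - α ^ (k+1)/2, ayI1_sub α u hα0' k hx hk2, ?_, by linarith, by linarith⟩
      have e1 : aySum α (k+1) + α ^ (k+2)/2 ≤ α*u + α := by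
        linarith [mul_le_mul_of_nonneg_left hx hα0']
      have e2 : α*u + α < aySum α (k+2) := by
        linarith [mul_lt_mul_of_pos_left hk2 hα0]
      rw [ayI1_sub α (α*u+α) hα0' (k+1) e1 e2]; ring
  have hx0 : 0 ≤ x := le_trans hc0 hx1
  have hxub : x < 1 - α ^ (m+2) := by linarith
  have hIEt : ayIE α (α*u+α) = α*x + α - 1/2 := by
    rw [ayIE, hxt, ayI2]
    rw [ayFract2 (by nlinarith) (by linarith [mul_lt_mul_of_pos_left hxub hα0])]
    ring
  rw [hIEt, ayPsi, ayIE, hxu, ayI2]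
  congr 1
  rw [hinv]
  linear_combination (x + 1) * hkey


/-- Renormalization of the Arnoux–Yoccoz interval exchange (Arnoux–Yoccoz):
for every `s ∈ [0, α)`, `ψ(ĨE(s)) = IE(ψ(s))`. -/
theorem arnoux_yoccoz_renormalization (g : ℕ) (hg : 2 ≤ g) (α : ℝ) (hα0 : 0 < α) (hα1 : α < 1)
    (hsum : ∑ k ∈ Finset.Icc 1 g, α ^ k = 1)
    (s : ℝ) (hs : s ∈ Set.Ico (0 : ℝ) α) :
    ayPsi α (ayIEhat α s) = ayIE α (ayPsi α s) := by
  obtain ⟨m, rfl⟩ : ∃ m, g = m + 2 := ⟨g - 2, by omega⟩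
  obtain ⟨hs0, hs1⟩ := hs
  have hα0' := hα0.le
  have hsum' : aySum α (m+2) = 1 := hsum
  have hA0 : (0:ℝ) < α ^ (m+2) := pow_pos hα0 _
  have hA1 : α ^ (m+2) < 1 := pow_lt_one₀ hα0' hα1 (by omega)
  have hkey := ay_key α m hsum'
  have hhalf : 1/2 < α := by nlinarith [mul_pos hα0 hA0]
  have hE0 : (0:ℝ) < 2 - α ^ (m+2) := by linarith
  have hinv : α⁻¹ = 2 - α ^ (m+2) := inv_eq_of_mul_eq_one_right hkey
  have hm1 : aySum α (m+1) = 1 - α ^ (m+2) := by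
    have := aySum_succ α (m+1); linarith
  by_cases h1 : s < (1 - α)/2
  · -- Case 3a : s ∈ [0, (1-α)/2), return time 2
    have hI1 : ayI1 α s = s + α ^ (0+1) / 2 :=
      ayI1_add α s hα0' 0 (by rw [aySum_zero]; exact hs0) (by
        simp only [zero_add, pow_one, aySum_one]; linarith)
    norm_num at hI1
    have hIEs : ayIE α s = s + α/2 + 1/2 := by
      rw [ayIE, hI1, ayI2, ayFract1 (by linarith) (by linarith)]
    have hge : ¬ ayIE α s < α := by rw [hIEs]; push_neg; linarith
    have hψ : ayPsi α s = α⁻¹ * s + (α⁻¹ - 1)/2 := by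
      rw [ayPsi]
      exact ayFract1 (by rw [hinv]; linarith [mul_nonneg hE0.le hs0])
        (by rw [hinv]; linarith [mul_lt_mul_of_pos_left h1 hE0])
    have hu0 : 0 ≤ ayPsi α s := by rw [ayPsi]; exact Int.fract_nonneg _
    have hu1 : ayPsi α s < aySum α (m+1) := by
      rw [hψ, hinv, hm1]
      linarith [mul_lt_mul_of_pos_left h1 hE0]
    have htu : ayIE α s = α * ayPsi α s + α := by
      rw [hIEs, hψ, hinv]; linear_combination (-s - 1/2) * hkey
    rw [ayIEhat, if_neg hge, htu]
    exact ay_key_case3 α m hα0 hα1 hsum' _ hu0 hu1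
  · push_neg at h1
    by_cases h2 : s < α/2
    · -- Case 1 : s ∈ [(1-α)/2, α/2), return time 1
      have hI1 : ayI1 α s = s + α ^ (0+1) / 2 :=
        ayI1_add α s hα0' 0 (by rw [aySum_zero]; exact hs0) (by
          simp only [zero_add, pow_one, aySum_one]; linarith)
      norm_num at hI1
      have hIEs : ayIE α s = s + α/2 - 1/2 := by
        rw [ayIE, hI1, ayI2, ayFract2 (by linarith) (by linarith)]; ring
      have hlt : ayIE α s < α := by rw [hIEs]; linarith
      have hψ : ayPsi α s = α⁻¹ * s + (α⁻¹ - 1)/2 := by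
        rw [ayPsi]
        exact ayFract1 (by rw [hinv]; linarith [mul_nonneg hE0.le hs0])
          (by rw [hinv]; linarith [mul_lt_mul_of_pos_left h2 hE0])
      have e1 : aySum α (m+1) ≤ ayPsi α s := by
        rw [hψ, hinv, hm1]
        linarith [mul_le_mul_of_nonneg_left h1 hE0.le]
      have e2 : ayPsi α s + α ^ (m+2) / 2 < aySum α (m+2) := by
        rw [hψ, hinv, hsum']
        linarith [mul_lt_mul_of_pos_left h2 hE0]
      have hI1u := ayI1_add α (ayPsi α s) hα0' (m+1) e1 e2
      rw [ayIEhat, if_pos hlt, hIEs, ayIE, hI1u, ayI2, hψ]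
      simp only [ayPsi]
      rw [show α⁻¹ * s + (α⁻¹ - 1)/2 + α ^ (m+1+1) / 2 + 1/2
            = (α⁻¹ * (s + α/2 - 1/2) + (α⁻¹ - 1)/2) + 1 by
          rw [hinv]; linear_combination (-1/2) * hkey]
      rw [ayFractAdd]
    · push_neg at h2
      by_cases h3 : s < (3*α - 1)/2
      · -- Case 2 : s ∈ [α/2, (3α-1)/2), return time 1
        have hI1 : ayI1 α s = s - α ^ (0+1) / 2 :=
          ayI1_sub α s hα0' 0 (by
            simp only [aySum_zero, zero_add, pow_one]; linarith) (by
            simp only [zero_add, aySum_one]; linarith)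
        norm_num at hI1
        have hIEs : ayIE α s = s - α/2 + 1/2 := by
          rw [ayIE, hI1, ayI2, ayFract1 (by linarith) (by linarith)]
        have hlt : ayIE α s < α := by rw [hIEs]; linarith
        have hψ : ayPsi α s = α⁻¹ * s + (α⁻¹ - 1)/2 := by
          rw [ayPsi]
          exact ayFract1 (by rw [hinv]; linarith [mul_nonneg hE0.le hs0])
            (by rw [hinv]; linarith [mul_lt_mul_of_pos_left h3 hE0])
        have e1 : aySum α (m+1) + α ^ (m+2) / 2 ≤ ayPsi α s := by
          rw [hψ, hinv, hm1]
          linarith [mul_le_mul_of_nonneg_left h2 hE0.le]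
        have e2 : ayPsi α s < aySum α (m+2) := by
          rw [hψ, hinv, hsum']
          linarith [mul_lt_mul_of_pos_left h3 hE0]
        have hI1u := ayI1_sub α (ayPsi α s) hα0' (m+1) e1 e2
        rw [ayIEhat, if_pos hlt, hIEs, ayIE, hI1u, ayI2, hψ]
        simp only [ayPsi]
        congr 1
        rw [hinv]
        linear_combination (-1/2) * hkey
      · -- Case 3b : s ∈ [(3α-1)/2, α), return time 2
        push_neg at h3
        have hI1 : ayI1 α s = s - α ^ (0+1) / 2 :=
          ayI1_sub α s hα0' 0 (by
            simp only [aySum_zero, zero_add, pow_one]; linarith) (by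
            simp only [zero_add, aySum_one]; linarith)
        norm_num at hI1
        have hIEs : ayIE α s = s - α/2 + 1/2 := by
          rw [ayIE, hI1, ayI2, ayFract1 (by linarith) (by linarith)]
        have hge : ¬ ayIE α s < α := by rw [hIEs]; push_neg; linarith
        have hψ : ayPsi α s = α⁻¹ * s + (α⁻¹ - 1)/2 - 1 := by
          rw [ayPsi, ayFract2 (by rw [hinv]; linarith [mul_le_mul_of_nonneg_left h3 hE0.le])
            (by rw [hinv]; linarith [mul_lt_mul_of_pos_left hs1 hE0])]
        have hu0 : 0 ≤ ayPsi α s := by rw [ayPsi]; exact Int.fract_nonneg _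
        have hu1 : ayPsi α s < aySum α (m+1) := by
          rw [hψ, hinv, hm1]
          linarith [mul_lt_mul_of_pos_left hs1 hE0]
        have htu : ayIE α s = α * ayPsi α s + α := by
          rw [hIEs, hψ, hinv]; linear_combination (-s - 1/2) * hkey
        rw [ayIEhat, if_neg hge, htu]
        exact ay_key_case3 α m hα0 hα1 hsum' _ hu0 hu1
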